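/- Let Γ be the Dynkin diagram of type Aₙ with the linear orientation Γ⃗ given by the arrows i → i−1 for i = 2,…,n. Then the assignment ε_i ↦ T_{n+1−i} (for i = 1,…,n) extends to a monoid isomorphism from KH(Γ⃗) onto 𝒞_{n+1}, where T_j ∈ 𝒞_{n+1} is the transformation of {1,…,n+1} sending j+1 to j and fixing all other points. In particular, KH(Γ⃗) is isomorphic to the monoid of all order-preserving and order-decreasing total transformations of {1,…,n+1}. -/

import Mathlib

open FreeMonoid SimpleGraph

/-- The defining relations of a Hecke-Kiselman monoid associated with the
mixed graph encoded by the binary relation `Θ`. -/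
inductive HKRel {ι : Type*} (Θ : ι → ι → Prop) : FreeMonoid ι → FreeMonoid ι → Prop
  | idem (i : ι) : HKRel Θ (of i * of i) (of i)
  | comm (i j : ι) (h₁ : ¬ Θ i j) (h₂ : ¬ Θ j i) :
      HKRel Θ (of i * of j) (of j * of i)
  | braid (i j : ι) (h₁ : Θ i j) (h₂ : Θ j i) :
      HKRel Θ (of i * of j * of i) (of j * of i * of j)
  | kisel (i j : ι) (h₁ : Θ i j) (h₂ : ¬ Θ j i) :
      HKRel Θ (of i * of j * of i) (of i * of j)
  | kisel' (i j : ι) (h₁ : Θ i j) (h₂ : ¬ Θ j i) :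
      HKRel Θ (of j * of i * of j) (of i * of j)

/-- The Hecke-Kiselman monoid of the mixed graph encoded by `Θ`. -/
abbrev HK {ι : Type*} (Θ : ι → ι → Prop) : Type _ := (conGen (HKRel Θ)).Quotient

/-- The canonical idempotent generators of a Hecke-Kiselman monoid. -/
def HK.gen {ι : Type*} (Θ : ι → ι → Prop) (i : ι) : HK Θ :=
  (conGen (HKRel Θ)).mk' (FreeMonoid.of i)
/-- The monoid (under composition) of all order-preserving and order-decreasing
total transformations of `Fin m`. -/
def OrderDecMonoid (m : ℕ) : Submonoid (Function.End (Fin m)) where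
  carrier := {f | Monotone f ∧ ∀ x, f x ≤ x}
  one_mem' := ⟨monotone_id, fun _ => le_rfl⟩
  mul_mem' := by
    rintro f g ⟨hf₁, hf₂⟩ ⟨hg₁, hg₂⟩
    exact ⟨hf₁.comp hg₁, fun x => (hf₂ (g x)).trans (hg₂ x)⟩

/-- The transformation `T k` of `{0, …, n}` sending the point `k + 1` to `k` and
fixing all other points (in the 1-indexed notation of the paper this is the
transformation `T (k+1)` of `{1, …, n+1}` sending `k + 2` to `k + 1`). -/
def T {n : ℕ} (k : Fin n) : Function.End (Fin (n + 1)) :=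
  fun x => if (x : ℕ) = (k : ℕ) + 1 then k.castSucc else x

namespace KisAux

variable {n : ℕ}

abbrev Θn (n : ℕ) : Fin n → Fin n → Prop := fun a b => (a : ℕ) = (b : ℕ) + 1

abbrev Q (n : ℕ) := HK (Θn n)

/-! ### Basic facts about `T` -/

lemma T_val (k : Fin n) (x : Fin (n+1)) :
    ((T k x : Fin (n+1)) : ℕ) = if (x : ℕ) = (k : ℕ) + 1 then (k : ℕ) else (x : ℕ) := by
  unfold T
  split <;> simp

lemma T_mul_val (k : Fin n) (f : Function.End (Fin (n+1))) (x : Fin (n+1)) :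
    (((T k * f) x : Fin (n+1)) : ℕ)
      = if ((f x : Fin (n+1)) : ℕ) = (k : ℕ) + 1 then (k : ℕ) else ((f x : Fin (n+1)) : ℕ) := by
  show ((T k (f x) : Fin (n+1)) : ℕ) = _
  exact T_val k (f x)

lemma T_idem (k : Fin n) : T k * T k = T k := by
  funext x
  apply Fin.ext
  show ((T k (T k x) : Fin (n+1)) : ℕ) = _
  simp only [T_val]
  split_ifs <;> omega

lemma T_comm (a b : Fin n) (h₁ : (a : ℕ) ≠ (b : ℕ) + 1) (h₂ : (b : ℕ) ≠ (a : ℕ) + 1) :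
    T a * T b = T b * T a := by
  funext x
  apply Fin.ext
  show ((T a (T b x) : Fin (n+1)) : ℕ) = ((T b (T a x) : Fin (n+1)) : ℕ)
  simp only [T_val]
  split_ifs <;> omega

lemma T_kis (a b : Fin n) (h : (b : ℕ) = (a : ℕ) + 1) :
    T a * T b * T a = T a * T b := by
  funext x
  apply Fin.ext
  show ((T a (T b (T a x)) : Fin (n+1)) : ℕ) = ((T a (T b x) : Fin (n+1)) : ℕ)
  simp only [T_val]
  split_ifs <;> omega

lemma T_kis' (a b : Fin n) (h : (b : ℕ) = (a : ℕ) + 1) :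
    T b * T a * T b = T a * T b := by
  funext x
  apply Fin.ext
  show ((T b (T a (T b x)) : Fin (n+1)) : ℕ) = ((T a (T b x) : Fin (n+1)) : ℕ)
  simp only [T_val]
  split_ifs <;> omega

lemma T_mem (k : Fin n) : T k ∈ OrderDecMonoid (n + 1) := by
  constructor
  · intro x y hxy
    have hxy' : (x : ℕ) ≤ (y : ℕ) := hxy
    show T k x ≤ T k y
    have := T_val k x
    have := T_val k y
    rw [Fin.le_def, this]
    rw [T_val]
    split_ifs <;> omega
  · intro x
    show T k x ≤ x
    rw [Fin.le_def, T_val]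
    split_ifs <;> omega

end KisAux
namespace KisAux

variable {n : ℕ}

/-! ### Generators of the Hecke–Kiselman monoid indexed by `ℕ` (via `Fin.rev`) -/

def E (n : ℕ) (k : ℕ) : Q n :=
  if h : k < n then HK.gen (Θn n) (Fin.rev ⟨k, h⟩) else 1

lemma E_pos {k : ℕ} (h : k < n) : E n k = HK.gen (Θn n) (Fin.rev ⟨k, h⟩) := dif_pos h

lemma E_neg {k : ℕ} (h : ¬ k < n) : E n k = 1 := dif_neg h

lemma gen_eq (i : Fin n) : HK.gen (Θn n) i = E n (i.rev : ℕ) := by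
  rw [E_pos i.rev.isLt]
  congr 1
  apply Fin.ext
  simp only [Fin.val_rev]
  omega

lemma hk_mk_eq {u v : FreeMonoid (Fin n)} (h : HKRel (Θn n) u v) :
    ((conGen (HKRel (Θn n))).mk' u : Q n) = (conGen (HKRel (Θn n))).mk' v :=
  (Con.eq _).2 (ConGen.Rel.of _ _ h)

lemma E_idem (k : ℕ) : E n k * E n k = E n k := by
  by_cases h : k < n
  · rw [E_pos h]
    have := hk_mk_eq (HKRel.idem (Θ := Θn n) (Fin.rev ⟨k, h⟩))
    rw [map_mul] at this
    exact this
  · rw [E_neg h, one_mul]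

lemma E_comm {k j : ℕ} (hkj : k + 2 ≤ j) : E n k * E n j = E n j * E n k := by
  by_cases hj : j < n
  · have hk : k < n := by omega
    rw [E_pos hj, E_pos hk]
    have h₁ : ¬ Θn n (Fin.rev ⟨k, hk⟩) (Fin.rev ⟨j, hj⟩) := by
      simp only [Θn, Fin.val_rev]
      omega
    have h₂ : ¬ Θn n (Fin.rev ⟨j, hj⟩) (Fin.rev ⟨k, hk⟩) := by
      simp only [Θn, Fin.val_rev]
      omega
    have := hk_mk_eq (HKRel.comm (Fin.rev ⟨k, hk⟩) (Fin.rev ⟨j, hj⟩) h₁ h₂)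
    rw [map_mul, map_mul] at this
    exact this
  · rw [E_neg hj, one_mul, mul_one]

lemma E_kis (k : ℕ) : E n k * E n (k+1) * E n k = E n k * E n (k+1) := by
  by_cases h : k + 1 < n
  · have hk : k < n := by omega
    rw [E_pos h, E_pos hk]
    have h₁ : Θn n (Fin.rev ⟨k, hk⟩) (Fin.rev ⟨k+1, h⟩) := by
      simp only [Θn, Fin.val_rev]; omega
    have h₂ : ¬ Θn n (Fin.rev ⟨k+1, h⟩) (Fin.rev ⟨k, hk⟩) := by
      simp only [Θn, Fin.val_rev]; omega
    have := hk_mk_eq (HKRel.kisel (Fin.rev ⟨k, hk⟩) (Fin.rev ⟨k+1, h⟩) h₁ h₂)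
    rw [map_mul, map_mul] at this
    exact this
  · rw [E_neg (k := k+1) h, mul_one, E_idem]

lemma E_kis' (k : ℕ) : E n (k+1) * E n k * E n (k+1) = E n k * E n (k+1) := by
  by_cases h : k + 1 < n
  · have hk : k < n := by omega
    rw [E_pos h, E_pos hk]
    have h₁ : Θn n (Fin.rev ⟨k, hk⟩) (Fin.rev ⟨k+1, h⟩) := by
      simp only [Θn, Fin.val_rev]; omega
    have h₂ : ¬ Θn n (Fin.rev ⟨k+1, h⟩) (Fin.rev ⟨k, hk⟩) := by
      simp only [Θn, Fin.val_rev]; omega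
    have := hk_mk_eq (HKRel.kisel' (Fin.rev ⟨k, hk⟩) (Fin.rev ⟨k+1, h⟩) h₁ h₂)
    rw [map_mul, map_mul] at this
    exact this
  · rw [E_neg (k := k+1) h, one_mul, mul_one]

/-! ### Chains -/

def chainLen (n : ℕ) : ℕ → ℕ → Q n
  | 0, _ => 1
  | l + 1, a => E n a * chainLen n l (a + 1)

def chain (n : ℕ) (a b : ℕ) : Q n := chainLen n (b - a) a

lemma chain_of_le {a b : ℕ} (h : b ≤ a) : chain n a b = 1 := by
  rw [chain, Nat.sub_eq_zero_of_le h]; rfl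

lemma chain_cons {a b : ℕ} (h : a < b) : chain n a b = E n a * chain n (a+1) b := by
  have hb : b - a = (b - (a+1)) + 1 := by omega
  rw [chain, hb]
  rfl

lemma chainLen_comm {k : ℕ} : ∀ l a, k + 2 ≤ a →
    E n k * chainLen n l a = chainLen n l a * E n k
  | 0, a, _ => by simp [chainLen]
  | l + 1, a, h => by
    rw [chainLen, ← mul_assoc, E_comm h, mul_assoc, chainLen_comm l (a+1) (by omega),
      ← mul_assoc, mul_assoc]

lemma chain_comm {k a b : ℕ} (h : k + 2 ≤ a) :
    E n k * chain n a b = chain n a b * E n k :=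
  chainLen_comm _ _ h

lemma chain_absorb {k b : ℕ} : ∀ d a, k - a ≤ d → a ≤ k → k < b →
    E n k * chain n a b = chain n a b
  | 0, a, hd, hak, hkb => by
    have : a = k := by omega
    subst this
    rw [chain_cons hkb, ← mul_assoc, E_idem]
  | d + 1, a, hd, hak, hkb => by
    rcases eq_or_lt_of_le hak with h | h
    · subst h
      rw [chain_cons hkb, ← mul_assoc, E_idem]
    · by_cases h1 : a + 1 = k
      · subst h1
        rw [chain_cons (show a < b by omega), chain_cons (show a + 1 < b by omega)]
        simp only [← mul_assoc]
        rw [E_kis']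
      · have hc : E n k * E n a = E n a * E n k := (E_comm (by omega)).symm
        rw [chain_cons (show a < b by omega)]
        simp only [← mul_assoc]
        rw [hc]
        simp only [mul_assoc]
        rw [chain_absorb d (a+1) (by omega) (by omega) hkb]

lemma chain_dup {k b : ℕ} :
    E n k * chain n (k+1) b * E n k = E n k * chain n (k+1) b := by
  by_cases h : b ≤ k + 1
  · simp [chain_of_le h, E_idem]
  · rw [chain_cons (show k + 1 < b by omega)]
    have hc := chain_comm (n := n) (k := k) (a := k+1+1) (b := b) (by omega)
    simp only [mul_assoc]
    rw [← hc]
    simp only [← mul_assoc]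
    rw [E_kis]

end KisAux
namespace KisAux

variable {n : ℕ}

/-! ### The normal form `W` -/

def W (n : ℕ) (g : ℕ → ℕ) : ℕ → Q n
  | 0 => 1
  | t + 1 => chain n (g (t+1)) (t+1) * W n g t

lemma W_congr {g₁ g₂ : ℕ → ℕ} : ∀ t, (∀ y, 1 ≤ y → y ≤ t → g₁ y = g₂ y) →
    W n g₁ t = W n g₂ t
  | 0, _ => rfl
  | t + 1, h => by
    rw [W, W, h (t+1) (by omega) le_rfl, W_congr t (fun y h1 h2 => h y h1 (by omega))]

lemma W_id {g : ℕ → ℕ} : ∀ t, (∀ y, y ≤ t → g y = y) → W n g t = 1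
  | 0, _ => rfl
  | t + 1, h => by
    rw [W, chain_of_le (h (t+1) le_rfl).ge, one_mul, W_id t fun y hy => h y (by omega)]

/-- The key lemma: multiplying the normal form of `g` by `E k` on the left yields the
normal form of `T k ∘ g`. -/
lemma E_W (k : ℕ) (g : ℕ → ℕ) (mono : ∀ x y, x ≤ y → g x ≤ g y) (dec : ∀ y, g y ≤ y) :
    ∀ t, k + 1 ≤ t →
      E n k * W n g t = W n (fun y => if g y = k + 1 then k else g y) t := by
  intro t ht
  induction t, ht using Nat.le_induction with
  | base =>
    -- t = k + 1
    rw [W, W]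
    have hWk : W n g k = W n (fun y => if g y = k + 1 then k else g y) k :=
      W_congr k fun y h1 h2 => by
        have := dec y
        have : g y ≠ k + 1 := by omega
        simp [this]
    rcases eq_or_lt_of_le (dec (k+1)) with h | h
    · -- g (k+1) = k + 1
      rw [chain_of_le h.ge]
      have h2 : (if g (k+1) = k + 1 then k else g (k+1)) = k := by simp [h]
      rw [h2, chain_cons (show k < k + 1 by omega), chain_of_le le_rfl, hWk]
      simp [mul_assoc]
    · -- g (k+1) ≤ k
      have h2 : (if g (k+1) = k + 1 then k else g (k+1)) = g (k+1) := by
        have : g (k+1) ≠ k + 1 := by omega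
        simp [this]
      rw [h2, ← mul_assoc, chain_absorb (k - g (k+1)) (g (k+1)) le_rfl (by omega) (by omega), hWk]
  | succ t ht IH =>
    rw [W, W]
    rcases Nat.lt_trichotomy (g (t+1)) (k+1) with h | h | h
    · -- g (t+1) ≤ k : absorption, and nothing changes
      have hg : ∀ y, y ≤ t + 1 → g y ≠ k + 1 := fun y hy => by
        have := mono y (t+1) hy
        omega
      have h2 : (if g (t+1) = k + 1 then k else g (t+1)) = g (t+1) := by
        simp [hg (t+1) le_rfl]
      rw [h2, ← mul_assoc,
        chain_absorb (k - g (t+1)) (g (t+1)) le_rfl (by omega) (by omega)]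
      congr 1
      exact W_congr t fun y h1 h2 => by simp [hg y (by omega)]
    · -- g (t+1) = k + 1
      have h2 : (if g (t+1) = k + 1 then k else g (t+1)) = k := by simp [h]
      rw [h2, h, chain_cons (show k < t + 1 by omega)]
      have hdup := chain_dup (n := n) (k := k) (b := t+1)
      calc E n k * (chain n (k+1) (t+1) * W n g t)
          = (E n k * chain n (k+1) (t+1)) * W n g t := by rw [mul_assoc]
        _ = (E n k * chain n (k+1) (t+1) * E n k) * W n g t := by rw [hdup]
        _ = (E n k * chain n (k+1) (t+1)) * (E n k * W n g t) := by
            simp only [mul_assoc]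
        _ = E n k * chain n (k+1) (t+1) * W n (fun y => if g y = k + 1 then k else g y) t := by
            rw [IH]
    · -- g (t+1) ≥ k + 2 : commute past the chain
      have h2 : (if g (t+1) = k + 1 then k else g (t+1)) = g (t+1) := by
        have : g (t+1) ≠ k + 1 := by omega
        simp [this]
      rw [h2, ← mul_assoc, chain_comm (show k + 2 ≤ g (t+1) by omega), mul_assoc, IH]

end KisAux
namespace KisAux

variable {n : ℕ}

/-! ### The homomorphism to `OrderDecMonoid` -/

def Fhom (n : ℕ) : FreeMonoid (Fin n) →* OrderDecMonoid (n + 1) :=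
  FreeMonoid.lift fun i => ⟨T i.rev, T_mem i.rev⟩

lemma hrel : conGen (HKRel (Θn n)) ≤ Con.ker (Fhom n) := by
  apply Con.conGen_le.mpr
  rintro x y h
  rw [Con.ker_rel]
  apply Subtype.ext
  cases h with
  | idem i =>
    simp only [map_mul, Fhom, FreeMonoid.lift_eval_of, Submonoid.coe_mul]
    exact T_idem i.rev
  | comm i j h₁ h₂ =>
    simp only [map_mul, Fhom, FreeMonoid.lift_eval_of, Submonoid.coe_mul]
    refine T_comm i.rev j.rev ?_ ?_ <;>
      · have hi := i.isLt
        have hj := j.isLt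
        simp only [Θn] at h₁ h₂
        simp only [Fin.val_rev]
        omega
  | braid i j h₁ h₂ =>
    exfalso
    simp only [Θn] at h₁ h₂
    omega
  | kisel i j h₁ h₂ =>
    simp only [map_mul, Fhom, FreeMonoid.lift_eval_of, Submonoid.coe_mul]
    refine T_kis i.rev j.rev ?_
    have hi := i.isLt
    have hj := j.isLt
    simp only [Θn] at h₁
    simp only [Fin.val_rev]
    omega
  | kisel' i j h₁ h₂ =>
    simp only [map_mul, Fhom, FreeMonoid.lift_eval_of, Submonoid.coe_mul]
    refine T_kis' i.rev j.rev ?_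
    have hi := i.isLt
    have hj := j.isLt
    simp only [Θn] at h₁
    simp only [Fin.val_rev]
    omega

def Phi (n : ℕ) : Q n →* OrderDecMonoid (n + 1) :=
  Con.lift _ (Fhom n) hrel

lemma Phi_gen (i : Fin n) :
    ((Phi n (HK.gen (Θn n) i) : OrderDecMonoid (n + 1)) : Function.End (Fin (n + 1)))
      = T i.rev := by
  rw [HK.gen, Phi, Con.lift_mk']
  simp [Fhom]

lemma Phi_E {k : ℕ} (h : k < n) :
    ((Phi n (E n k) : OrderDecMonoid (n + 1)) : Function.End (Fin (n + 1))) = T ⟨k, h⟩ := by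
  rw [E_pos h, Phi_gen, Fin.rev_rev]

lemma sub_mul_apply (A B : OrderDecMonoid (n + 1)) (x : Fin (n + 1)) :
    ((A * B : OrderDecMonoid (n + 1)) : Function.End (Fin (n + 1))) x
      = (A : Function.End (Fin (n + 1))) ((B : Function.End (Fin (n + 1))) x) := rfl

lemma chainLen_val : ∀ l a, a + l ≤ n → ∀ x : Fin (n + 1),
    (((Phi n (chainLen n l a) : OrderDecMonoid (n + 1)) : Function.End (Fin (n + 1))) x : ℕ)
      = if a < (x : ℕ) ∧ (x : ℕ) ≤ a + l then a else (x : ℕ)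
  | 0, a, _, x => by
    rw [chainLen, map_one]
    have : (((1 : OrderDecMonoid (n + 1)) : Function.End (Fin (n + 1))) x : ℕ) = (x : ℕ) := rfl
    rw [this]
    have := x.isLt
    split_ifs <;> omega
  | l + 1, a, hln, x => by
    have ha : a < n := by omega
    rw [chainLen, map_mul, sub_mul_apply, Phi_E ha, T_val,
      chainLen_val l (a+1) (by omega) x]
    have hval : ((⟨a, ha⟩ : Fin n) : ℕ) = a := rfl
    rw [hval]
    have := x.isLt
    split_ifs <;> omega

lemma chain_val {a b : ℕ} (hb : b ≤ n) (x : Fin (n + 1)) :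
    (((Phi n (chain n a b) : OrderDecMonoid (n + 1)) : Function.End (Fin (n + 1))) x : ℕ)
      = if a < (x : ℕ) ∧ (x : ℕ) ≤ b then a else (x : ℕ) := by
  rcases le_or_gt a b with h | h
  · rw [chain, chainLen_val (b - a) a (by omega) x,
      show a + (b - a) = b by omega]
  · rw [chain_of_le h.le, map_one]
    have h1 : (((1 : OrderDecMonoid (n + 1)) : Function.End (Fin (n + 1))) x : ℕ) = (x : ℕ) := rfl
    rw [h1]
    split_ifs <;> omega

lemma W_val {g : ℕ → ℕ} (mono : ∀ x y, x ≤ y → g x ≤ g y) (dec : ∀ y, g y ≤ y) :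
    ∀ t, t ≤ n → ∀ x : Fin (n + 1),
    (((Phi n (W n g t) : OrderDecMonoid (n + 1)) : Function.End (Fin (n + 1))) x : ℕ)
      = if 1 ≤ (x : ℕ) ∧ (x : ℕ) ≤ t then g (x : ℕ) else (x : ℕ)
  | 0, _, x => by
    rw [W, map_one]
    have h1 : (((1 : OrderDecMonoid (n + 1)) : Function.End (Fin (n + 1))) x : ℕ) = (x : ℕ) := rfl
    rw [h1]
    split_ifs <;> omega
  | t + 1, ht, x => by
    rw [W, map_mul, sub_mul_apply, chain_val (by omega), W_val mono dec t (by omega) x]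
    have h1 := dec (t + 1)
    have h2 := dec (x : ℕ)
    by_cases hx : (x : ℕ) = t + 1
    · have h3 : g (x : ℕ) = g (t + 1) := by rw [hx]
      split_ifs <;> omega
    · rcases le_or_gt (x : ℕ) (t + 1) with hle | hgt
      · have h3 := mono _ _ hle
        split_ifs <;> omega
      · split_ifs <;> omega

/-! ### From transformations back to normal forms -/

def gof (F : Function.End (Fin (n + 1))) : ℕ → ℕ :=
  fun y => if h : y < n + 1 then ((F ⟨y, h⟩ : Fin (n + 1)) : ℕ) else y

lemma gof_mono {F : Function.End (Fin (n + 1))} (hF : F ∈ OrderDecMonoid (n + 1)) :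
    ∀ x y, x ≤ y → gof F x ≤ gof F y := by
  intro x y hxy
  unfold gof
  split_ifs with hx hy hy
  · exact hF.1 (show (⟨x, hx⟩ : Fin (n+1)) ≤ ⟨y, hy⟩ from hxy)
  · have := hF.2 ⟨x, hx⟩
    have : ((F ⟨x, hx⟩ : Fin (n+1)) : ℕ) ≤ x := this
    omega
  · omega
  · exact hxy

lemma gof_dec {F : Function.End (Fin (n + 1))} (hF : F ∈ OrderDecMonoid (n + 1)) :
    ∀ y, gof F y ≤ y := by
  intro y
  unfold gof
  split_ifs with hy
  · exact hF.2 ⟨y, hy⟩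
  · exact le_rfl

lemma mk_eq_W (u : FreeMonoid (Fin n)) :
    (conGen (HKRel (Θn n))).mk' u
      = W n (gof ((Phi n ((conGen (HKRel (Θn n))).mk' u) : OrderDecMonoid (n + 1))
          : Function.End (Fin (n + 1)))) n := by
  induction u using FreeMonoid.inductionOn' with
  | one =>
    rw [map_one, map_one]
    refine (W_id n fun y hy => ?_).symm
    unfold gof
    split_ifs with h
    · rfl
    · rfl
  | of_mul i u IH =>
    have hmul : (conGen (HKRel (Θn n))).mk' (of i * u)
        = HK.gen (Θn n) i * (conGen (HKRel (Θn n))).mk' u := by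
      rw [map_mul]; rfl
    set F' : Function.End (Fin (n + 1)) :=
      ((Phi n ((conGen (HKRel (Θn n))).mk' u) : OrderDecMonoid (n + 1))
        : Function.End (Fin (n + 1))) with hF'
    have hF'mem : F' ∈ OrderDecMonoid (n + 1) := (Phi n ((conGen (HKRel (Θn n))).mk' u)).2
    have hk : (i.rev : ℕ) + 1 ≤ n := i.rev.isLt
    rw [hmul]
    conv_lhs => rw [gen_eq i, IH,
      E_W (i.rev : ℕ) (gof F') (gof_mono hF'mem) (gof_dec hF'mem) n hk]
    apply W_congr
    intro y h1 h2
    have hy : y < n + 1 := by omega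
    have hcoe : ((Phi n (HK.gen (Θn n) i * (conGen (HKRel (Θn n))).mk' u)
        : OrderDecMonoid (n + 1)) : Function.End (Fin (n + 1))) = T i.rev * F' := by
      rw [map_mul, Submonoid.coe_mul, Phi_gen]
    rw [hcoe]
    have hR : gof (T i.rev * F') y = ((T i.rev (F' ⟨y, hy⟩) : Fin (n + 1)) : ℕ) := by
      unfold gof
      rw [dif_pos hy]
      rfl
    have hL : gof F' y = ((F' ⟨y, hy⟩ : Fin (n + 1)) : ℕ) := by
      unfold gof
      rw [dif_pos hy]
    rw [hR, hL, T_val]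

lemma Phi_injective : Function.Injective (Phi n) := by
  intro q1 q2 h
  obtain ⟨u1, rfl⟩ := Con.mk'_surjective q1
  obtain ⟨u2, rfl⟩ := Con.mk'_surjective q2
  rw [mk_eq_W u1, mk_eq_W u2, h]

lemma Phi_surjective : Function.Surjective (Phi n) := by
  intro F
  refine ⟨W n (gof (F : Function.End (Fin (n + 1)))) n, ?_⟩
  have hFmem : (F : Function.End (Fin (n + 1))) ∈ OrderDecMonoid (n + 1) := F.2
  apply Subtype.ext
  funext x
  apply Fin.ext
  rw [W_val (gof_mono hFmem) (gof_dec hFmem) n le_rfl x]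
  have hx : (x : ℕ) < n + 1 := x.isLt
  split_ifs with h
  · unfold gof
    rw [dif_pos hx]
  · have h0 : (x : ℕ) = 0 := by omega
    have := hFmem.2 x
    have : (((F : Function.End (Fin (n + 1))) x : Fin (n + 1)) : ℕ) ≤ (x : ℕ) := this
    omega

end KisAux

/-- Let `Γ⃗` be the type `A n` Dynkin diagram with vertices
`1, …, n` (here indexed by `Fin n`, vertex `i+1` corresponding to `i : Fin n`)
and the linear orientation with arrows `i → i - 1`. Then `ε i ↦ T (n + 1 - i)`
(in 0-indexed notation `HK.gen i ↦ T i.rev`) extends to a monoid isomorphism from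
the Kiselman quotient of the 0-Hecke monoid onto the monoid `𝒞 (n+1)` of all
order-preserving and order-decreasing total transformations of `{1, …, n+1}`. -/
theorem kiselmanQuotient_typeA_iso_orderDec (n : ℕ) (hn : 1 ≤ n) :
    ∃ φ : HK (fun a b : Fin n => (a : ℕ) = (b : ℕ) + 1) ≃* OrderDecMonoid (n + 1),
      ∀ m : Fin n,
        (φ (HK.gen (fun a b : Fin n => (a : ℕ) = (b : ℕ) + 1) m) :
          Function.End (Fin (n + 1))) = T m.rev := by
  refine ⟨MulEquiv.ofBijective (KisAux.Phi n) ⟨KisAux.Phi_injective, KisAux.Phi_surjective⟩,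
    fun m => ?_⟩
  exact KisAux.Phi_gen m
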